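/- Let (X_i) be IID with E[|X|] < ∞, and N independent of (X_i) with moment indices satisfying I(X) ≤ I(N). Then I(S_N) = I(X), where S_N = Σ_{k=1}^N X_k (no assumption on the sign of the drift E[X]). -/

import Mathlib

open MeasureTheory ProbabilityTheory Real Filter
open scoped ENNReal NNReal

/-- The moment index `I(Z) = sup {s ≥ 0 : E[(Z⁺)^s] < ∞}`, valued in `ℝ≥0∞`. -/
noncomputable def momentIndex {Ω : Type*} [MeasurableSpace Ω] (μ : Measure Ω)
    (Z : Ω → ℝ) : ENNReal :=
  sSup {s : ENNReal | s ≠ ⊤ ∧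
    ∫⁻ ω, ENNReal.ofReal ((max (Z ω) 0) ^ s.toReal) ∂μ < ⊤}

namespace StoppedSumAux

open ENNReal

noncomputable def g (t : ℝ) (x : ℝ) : ℝ≥0∞ := ENNReal.ofReal ((max x 0) ^ t)

lemma g_def (t x : ℝ) : g t x = ENNReal.ofReal ((max x 0) ^ t) := rfl

lemma g_meas (t : ℝ) : Measurable (g t) := by unfold g; measurability

variable {Ω : Type*} [MeasurableSpace Ω] {μ : Measure Ω}

lemma mIdx_eq (μ : Measure Ω) (Z : Ω → ℝ) :
    momentIndex μ Z = sSup {s : ENNReal | s ≠ ⊤ ∧ ∫⁻ ω, g s.toReal (Z ω) ∂μ < ⊤} := rfl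

lemma mem_anti [IsProbabilityMeasure μ] {Z : Ω → ℝ} {r s : ℝ≥0∞} (hrs : r ≤ s)
    (hs : s ≠ ⊤ ∧ ∫⁻ ω, g s.toReal (Z ω) ∂μ < ⊤) :
    r ≠ ⊤ ∧ ∫⁻ ω, g r.toReal (Z ω) ∂μ < ⊤ := by
  have hr : r ≠ ⊤ := fun h => hs.1 (top_le_iff.mp (h ▸ hrs))
  refine ⟨hr, ?_⟩
  have hle : ∀ ω, g r.toReal (Z ω) ≤ 1 + g s.toReal (Z ω) := by
    intro ω
    have h0 : (0:ℝ) ≤ max (Z ω) 0 := le_max_right _ _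
    rcases le_total (max (Z ω) 0) 1 with h | h
    · calc g r.toReal (Z ω) ≤ ENNReal.ofReal 1 :=
            ENNReal.ofReal_le_ofReal (Real.rpow_le_one h0 h ENNReal.toReal_nonneg)
        _ ≤ 1 + g s.toReal (Z ω) := by simp
    · calc g r.toReal (Z ω) ≤ g s.toReal (Z ω) :=
            ENNReal.ofReal_le_ofReal
              (Real.rpow_le_rpow_of_exponent_le h (ENNReal.toReal_mono hs.1 hrs))
        _ ≤ 1 + g s.toReal (Z ω) := le_add_self
  calc ∫⁻ ω, g r.toReal (Z ω) ∂μ ≤ ∫⁻ ω, (1 + g s.toReal (Z ω)) ∂μ := lintegral_mono hle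
    _ = 1 + ∫⁻ ω, g s.toReal (Z ω) ∂μ := by
        rw [lintegral_add_left measurable_const, lintegral_one, measure_univ]
    _ < ⊤ := by
        exact ENNReal.add_lt_top.mpr ⟨ENNReal.one_lt_top, hs.2⟩

lemma lintegral_comp_identDistrib {Z W : Ω → ℝ} (hid : IdentDistrib Z W μ μ)
    (h : ℝ → ℝ≥0∞) (hh : Measurable h) :
    ∫⁻ ω, h (Z ω) ∂μ = ∫⁻ ω, h (W ω) ∂μ := by
  rw [← lintegral_map' hh.aemeasurable hid.aemeasurable_fst, hid.map_eq,
    lintegral_map' hh.aemeasurable hid.aemeasurable_snd]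

lemma lintegral_comp_indep [IsProbabilityMeasure μ]
    {X : ℕ → Ω → ℝ} (hXmeas : ∀ i, Measurable (X i)) {N : Ω → ℕ} (hNmeas : Measurable N)
    (hNindep : IndepFun (fun ω i => X i ω) N μ)
    (Φ : ℕ → (ℕ → ℝ) → ℝ≥0∞) (hΦ : Measurable fun p : (ℕ → ℝ) × ℕ => Φ p.2 p.1) :
    ∫⁻ ω, Φ (N ω) (fun i => X i ω) ∂μ
      = ∫⁻ n, ∫⁻ x, Φ n x ∂(μ.map (fun ω (i : ℕ) => X i ω)) ∂(μ.map N) := by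
  have hXV : Measurable (fun ω (i : ℕ) => X i ω) := measurable_pi_lambda _ hXmeas
  have hmap := (indepFun_iff_map_prod_eq_prod_map_map hNmeas.aemeasurable
    hXV.aemeasurable).mp hNindep.symm
  have hΦ' : Measurable fun p : ℕ × (ℕ → ℝ) => Φ p.1 p.2 := hΦ.comp measurable_swap
  have h1 : IsProbabilityMeasure (μ.map (fun ω (i : ℕ) => X i ω)) :=
    Measure.isProbabilityMeasure_map hXV.aemeasurable
  calc ∫⁻ ω, Φ (N ω) (fun i => X i ω) ∂μ
      = ∫⁻ p, Φ p.1 p.2 ∂(μ.map (fun ω => (N ω, fun i => X i ω))) :=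
        (lintegral_map hΦ' (hNmeas.prodMk hXV)).symm
    _ = ∫⁻ p, Φ p.1 p.2 ∂((μ.map N).prod (μ.map (fun ω (i : ℕ) => X i ω))) := by rw [hmap]
    _ = _ := lintegral_prod _ hΦ'.aemeasurable

lemma sum_rpow_le {n : ℕ} (hn : 1 ≤ n) {t : ℝ} (ht : 1 ≤ t) (a : ℕ → ℝ) (ha : ∀ k, 0 ≤ a k) :
    (∑ k ∈ Finset.range n, a k) ^ t
      ≤ (n : ℝ) ^ (t - 1) * ∑ k ∈ Finset.range n, a k ^ t := by
  have hn0 : (0:ℝ) < n := by exact_mod_cast hn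
  have hw : ∑ _k ∈ Finset.range n, (1/(n:ℝ)) = 1 := by
    rw [Finset.sum_const, Finset.card_range, nsmul_eq_mul]
    field_simp
  have key := Real.rpow_arith_mean_le_arith_mean_rpow (Finset.range n)
      (fun _ => 1/(n:ℝ)) a (fun i _ => by positivity) hw (fun i _ => ha i) ht
  have h1 : ∑ k ∈ Finset.range n, a k = (n:ℝ) * ∑ k ∈ Finset.range n, (1/(n:ℝ)) * a k := by
    rw [Finset.mul_sum]
    refine Finset.sum_congr rfl fun k _ => ?_
    field_simp
  have h2 : ∑ k ∈ Finset.range n, (1/(n:ℝ)) * a k ^ t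
      = (1/(n:ℝ)) * ∑ k ∈ Finset.range n, a k ^ t := by rw [Finset.mul_sum]
  rw [h1, Real.mul_rpow hn0.le (Finset.sum_nonneg fun i _ => mul_nonneg (by positivity) (ha i))]
  calc (n:ℝ) ^ t * (∑ k ∈ Finset.range n, (1/(n:ℝ)) * a k) ^ t
      ≤ (n:ℝ) ^ t * ((1/(n:ℝ)) * ∑ k ∈ Finset.range n, a k ^ t) :=
        mul_le_mul_of_nonneg_left (key.trans h2.le) (Real.rpow_nonneg hn0.le t)
    _ = (n:ℝ) ^ (t - 1) * ∑ k ∈ Finset.range n, a k ^ t := by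
        rw [Real.rpow_sub hn0, Real.rpow_one]; ring

lemma rpow_le_tangent {a c t : ℝ} (ha : 0 ≤ a) (hc : 1 ≤ c) (ht0 : 0 ≤ t) (ht1 : t ≤ 1) :
    a ^ t ≤ c ^ t + c ^ (t - 1) * a := by
  have hc0 : (0:ℝ) < c := lt_of_lt_of_le one_pos hc
  rcases le_total a c with h | h
  · exact le_add_of_le_of_nonneg (Real.rpow_le_rpow ha h ht0) (by positivity)
  · have ha0 : 0 < a := hc0.trans_le h
    have hsplit : a ^ t = a ^ (t - 1) * a := by
      rw [← Real.rpow_add_one ha0.ne' (t - 1), sub_add_cancel]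
    have h2 : a ^ (t - 1) ≤ c ^ (t - 1) :=
      Real.rpow_le_rpow_of_nonpos hc0 h (by linarith)
    calc a ^ t = a ^ (t - 1) * a := hsplit
      _ ≤ c ^ (t - 1) * a := mul_le_mul_of_nonneg_right h2 ha0.le
      _ ≤ c ^ t + c ^ (t - 1) * a := le_add_of_nonneg_left (by positivity)

end StoppedSumAux

open StoppedSumAux

/-- If `E[|X|] < ∞` and `I(X) ≤ I(N)`, then `I(S_N) = I(X)`, with no
assumption on the sign of the drift `E[X]`. -/
theorem stopped_sum_moment_index_eq_increment
    {Ω : Type*} [MeasurableSpace Ω] (μ : Measure Ω) [IsProbabilityMeasure μ]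
    (X : ℕ → Ω → ℝ) (hXmeas : ∀ i, Measurable (X i))
    (hXindep : iIndepFun X μ)
    (hXident : ∀ i, IdentDistrib (X i) (X 0) μ μ)
    (N : Ω → ℕ) (hNmeas : Measurable N) (hNpos : ∀ ω, 1 ≤ N ω)
    (hNindep : IndepFun (fun ω i => X i ω) N μ)
    (hXint : Integrable (X 0) μ)
    (hidx : momentIndex μ (X 0) ≤ momentIndex μ (fun ω => (N ω : ℝ))) :
    momentIndex μ (fun ω => ∑ k ∈ Finset.range (N ω), X k ω)
      = momentIndex μ (X 0) := by
  classical
  have hXV : Measurable (fun ω (i : ℕ) => X i ω) := measurable_pi_lambda _ hXmeas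
  -- Part 1 : I(S_N) ≤ I(X)
  have part1 : momentIndex μ (fun ω => ∑ k ∈ Finset.range (N ω), X k ω)
      ≤ momentIndex μ (X 0) := by
    rw [mIdx_eq, mIdx_eq]
    apply sSup_le_sSup
    rintro s ⟨hstop, hsfin⟩
    set t := s.toReal with htdef
    have ht0 : 0 ≤ t := ENNReal.toReal_nonneg
    -- an atom of N
    have hex : ∃ n₀ : ℕ, μ (N ⁻¹' {n₀}) ≠ 0 := by
      by_contra h
      push_neg at h
      have huniv : (Set.univ : Set Ω) = ⋃ n : ℕ, N ⁻¹' {n} := by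
        ext ω; simp
      have hle : μ Set.univ ≤ ∑' n : ℕ, μ (N ⁻¹' {n}) := by
        rw [huniv]; exact measure_iUnion_le _
      simp only [h, tsum_zero, nonpos_iff_eq_zero] at hle
      rw [measure_univ] at hle
      exact one_ne_zero hle
    obtain ⟨n₀, hn₀⟩ := hex
    have hn₀1 : 1 ≤ n₀ := by
      rcases Nat.eq_zero_or_pos n₀ with h | h
      · exfalso
        apply hn₀
        rw [h]
        have : N ⁻¹' {0} = (∅ : Set Ω) := by
          ext ω
          simp only [Set.mem_preimage, Set.mem_singleton_iff, Set.mem_empty_iff_false,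
            iff_false]
          exact fun hc => by have := hNpos ω; omega
        rw [this, measure_empty]
      · exact h
    -- finiteness of the n₀-th partial sum's moment
    set Φ : ℕ → (ℕ → ℝ) → ℝ≥0∞ :=
      fun n x => if n = n₀ then g t (∑ k ∈ Finset.range n₀, x k) else 0 with hΦdef
    have hc : Measurable fun x : ℕ → ℝ => g t (∑ k ∈ Finset.range n₀, x k) :=
      (g_meas t).comp (Finset.measurable_sum _ (fun k _ => measurable_pi_apply k))
    have hΦmeas : Measurable fun p : (ℕ → ℝ) × ℕ => Φ p.2 p.1 := by
      apply measurable_from_prod_countable_left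
      intro n
      by_cases h : n = n₀ <;> simp only [hΦdef, h, if_true, if_false]
      · exact hc
      · exact measurable_const
    have htrans := lintegral_comp_indep hXmeas hNmeas hNindep Φ hΦmeas
    have hptw : ∀ ω, Φ (N ω) (fun i => X i ω)
        ≤ g t (∑ k ∈ Finset.range (N ω), X k ω) := by
      intro ω
      by_cases h : N ω = n₀
      · simp only [hΦdef, h, if_true]
        exact le_rfl
      · simp only [hΦdef, h, if_false]
        exact zero_le
    have hlhs : ∫⁻ ω, Φ (N ω) (fun i => X i ω) ∂μ < ⊤ :=
      lt_of_le_of_lt (lintegral_mono hptw) hsfin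
    set En : ℝ≥0∞ := ∫⁻ ω, g t (∑ k ∈ Finset.range n₀, X k ω) ∂μ with hEndef
    have hinner : ∀ n : ℕ, (∫⁻ x, Φ n x ∂(μ.map (fun ω (i : ℕ) => X i ω)))
        = if n = n₀ then En else 0 := by
      intro n
      by_cases h : n = n₀ <;> simp only [hΦdef, h, if_true, if_false]
      · rw [hEndef]
        exact lintegral_map hc hXV
      · simp
    have hrhs : ∫⁻ n, (∫⁻ x, Φ n x ∂(μ.map (fun ω (i : ℕ) => X i ω))) ∂(μ.map N)
        = En * (μ.map N) {n₀} := by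
      calc ∫⁻ n, (∫⁻ x, Φ n x ∂(μ.map (fun ω (i : ℕ) => X i ω))) ∂(μ.map N)
          = ∫⁻ n, Set.indicator {n₀} (fun _ => En) n ∂(μ.map N) := by
            refine lintegral_congr fun n => ?_
            rw [hinner n]
            by_cases h : n = n₀ <;> simp [h]
        _ = ∫⁻ _n in {n₀}, En ∂(μ.map N) :=
            lintegral_indicator (measurableSet_singleton n₀) (f := fun _ => En)
        _ = En * (μ.map N) {n₀} := setLIntegral_const _ _
    have hmapN : (μ.map N) {n₀} = μ (N ⁻¹' {n₀}) :=
      Measure.map_apply hNmeas (measurableSet_singleton n₀)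
    have hEn : En < ⊤ := by
      by_contra h
      rw [not_lt, top_le_iff] at h
      rw [htrans, hrhs, h, ENNReal.top_mul (by rw [hmapN]; exact hn₀)] at hlhs
      exact (lt_irrefl _ hlhs)
    -- extract the increment
    set s' : Finset ℕ := Finset.range n₀ \ {0} with hs'def
    set S' : Ω → ℝ := fun ω => ∑ k ∈ s', X k ω with hS'def
    have hS'meas : Measurable S' := Finset.measurable_sum _ fun k _ => hXmeas k
    have hsplit : ∀ ω, ∑ k ∈ Finset.range n₀, X k ω = X 0 ω + S' ω := by
      intro ω
      have h0 : 0 ∈ Finset.range n₀ := Finset.mem_range.mpr hn₀1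
      rw [Finset.sum_eq_sum_sdiff_singleton_add h0, add_comm]
    have hexa : ∃ m : ℕ, μ {ω | -(m:ℝ) ≤ S' ω} ≠ 0 := by
      by_contra h
      push_neg at h
      have huniv : (Set.univ : Set Ω) = ⋃ m : ℕ, {ω | -(m:ℝ) ≤ S' ω} := by
        ext ω
        simp only [Set.mem_univ, true_iff, Set.mem_iUnion, Set.mem_setOf_eq]
        obtain ⟨m, hm⟩ := exists_nat_ge (-(S' ω))
        exact ⟨m, by linarith⟩
      have hle : μ Set.univ ≤ ∑' m : ℕ, μ {ω | -(m:ℝ) ≤ S' ω} := by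
        rw [huniv]; exact measure_iUnion_le _
      simp only [h, tsum_zero, nonpos_iff_eq_zero] at hle
      rw [measure_univ] at hle
      exact one_ne_zero hle
    obtain ⟨m, hq⟩ := hexa
    set A : ℝ := (m:ℝ) with hAdef
    have hA0 : (0:ℝ) ≤ A := Nat.cast_nonneg m
    set B : Set Ω := {ω | -A ≤ S' ω} with hBdef
    have hBmeas : MeasurableSet B := measurableSet_le measurable_const hS'meas
    have hptw2 : ∀ ω, B.indicator (fun _ => (1:ℝ≥0∞)) ω * g t (X 0 ω)
        ≤ ENNReal.ofReal ((2*A) ^ t)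
          + ENNReal.ofReal (2 ^ t) * g t (∑ k ∈ Finset.range n₀, X k ω) := by
      intro ω
      by_cases hB : ω ∈ B
      · rw [Set.indicator_of_mem hB, one_mul]
        rcases le_total (X 0 ω) (2*A) with h | h
        · refine le_trans ?_ (le_add_of_nonneg_right zero_le)
          exact ENNReal.ofReal_le_ofReal
            (Real.rpow_le_rpow (le_max_right _ _) (max_le h (by positivity)) ht0)
        · have hX00 : (0:ℝ) ≤ X 0 ω := le_trans (by positivity) h
          have hBS : -A ≤ S' ω := hB
          have hSn0 : (0:ℝ) ≤ ∑ k ∈ Finset.range n₀, X k ω := by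
            rw [hsplit ω]; linarith
          have hkey : max (X 0 ω) 0 ≤ 2 * max (∑ k ∈ Finset.range n₀, X k ω) 0 := by
            rw [max_eq_left hX00, max_eq_left hSn0, hsplit ω]; linarith
          refine le_trans ?_ (le_add_of_nonneg_left zero_le)
          calc g t (X 0 ω)
              ≤ ENNReal.ofReal ((2 * max (∑ k ∈ Finset.range n₀, X k ω) 0) ^ t) :=
                ENNReal.ofReal_le_ofReal
                  (Real.rpow_le_rpow (le_max_right _ _) hkey ht0)
            _ = ENNReal.ofReal (2 ^ t * (max (∑ k ∈ Finset.range n₀, X k ω) 0) ^ t) := by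
                rw [Real.mul_rpow (by norm_num) (le_max_right _ _)]
            _ = ENNReal.ofReal (2 ^ t) * g t (∑ k ∈ Finset.range n₀, X k ω) :=
                ENNReal.ofReal_mul (by positivity)
      · rw [Set.indicator_of_notMem hB, zero_mul]
        exact zero_le
    -- independence factorization
    have hfact : ∫⁻ ω, B.indicator (fun _ => (1:ℝ≥0∞)) ω * g t (X 0 ω) ∂μ
        = μ B * ∫⁻ ω, g t (X 0 ω) ∂μ := by
      have hSfun : S' = ∑ j ∈ s', X j := by
        ext ω; rw [hS'def]; simp [Finset.sum_apply]
      have hind : IndepFun S' (X 0) μ := by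
        rw [hSfun]
        exact iIndepFun.indepFun_finsetSum_of_notMem hXindep hXmeas (by simp [hs'def])
      set φ : ℝ → ℝ≥0∞ := Set.indicator (Set.Ici (-A)) (fun _ => (1:ℝ≥0∞)) with hφdef
      have hφmeas : Measurable φ := (measurable_const).indicator measurableSet_Ici
      have hcomp : IndepFun (fun ω => φ (S' ω)) (fun ω => g t (X 0 ω)) μ :=
        hind.comp hφmeas (g_meas t)
      have heq1 : ∀ ω, B.indicator (fun _ => (1:ℝ≥0∞)) ω = φ (S' ω) := by
        intro ω
        by_cases h : ω ∈ B
        · rw [Set.indicator_of_mem h, hφdef,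
            Set.indicator_of_mem (by exact h : S' ω ∈ Set.Ici (-A))]
        · rw [Set.indicator_of_notMem h, hφdef,
            Set.indicator_of_notMem (by exact h : S' ω ∉ Set.Ici (-A))]
      calc ∫⁻ ω, B.indicator (fun _ => (1:ℝ≥0∞)) ω * g t (X 0 ω) ∂μ
          = ∫⁻ ω, ((fun ω => φ (S' ω)) * fun ω => g t (X 0 ω)) ω ∂μ := by
            refine lintegral_congr fun ω => ?_
            rw [Pi.mul_apply, heq1 ω]
        _ = (∫⁻ ω, φ (S' ω) ∂μ) * ∫⁻ ω, g t (X 0 ω) ∂μ :=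
            lintegral_mul_eq_lintegral_mul_lintegral_of_indepFun
              (hφmeas.comp hS'meas) ((g_meas t).comp (hXmeas 0)) hcomp
        _ = μ B * ∫⁻ ω, g t (X 0 ω) ∂μ := by
            congr 1
            have : ∀ ω, φ (S' ω) = Set.indicator B (fun _ => (1:ℝ≥0∞)) ω :=
              fun ω => (heq1 ω).symm
            rw [lintegral_congr this]
            exact lintegral_indicator_one hBmeas
    have hfin2 : μ B * ∫⁻ ω, g t (X 0 ω) ∂μ < ⊤ := by
      rw [← hfact]
      calc ∫⁻ ω, B.indicator (fun _ => (1:ℝ≥0∞)) ω * g t (X 0 ω) ∂μ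
          ≤ ∫⁻ ω, (ENNReal.ofReal ((2*A) ^ t)
              + ENNReal.ofReal (2 ^ t) * g t (∑ k ∈ Finset.range n₀, X k ω)) ∂μ :=
            lintegral_mono hptw2
        _ = ENNReal.ofReal ((2*A) ^ t) + ENNReal.ofReal (2 ^ t) * En := by
            have hgS : Measurable fun ω => g t (∑ k ∈ Finset.range n₀, X k ω) := hc.comp hXV
            rw [lintegral_add_left measurable_const, lintegral_const, measure_univ, mul_one,
              lintegral_const_mul _ hgS]
        _ < ⊤ := by
            refine ENNReal.add_lt_top.mpr ⟨ENNReal.ofReal_lt_top, ?_⟩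
            exact ENNReal.mul_lt_top ENNReal.ofReal_lt_top hEn
    refine ⟨hstop, ?_⟩
    by_contra h'
    rw [not_lt, top_le_iff] at h'
    rw [h', ENNReal.mul_top hq] at hfin2
    exact lt_irrefl _ hfin2
  -- Part 2 : I(X) ≤ I(S_N)
  have part2 : momentIndex μ (X 0)
      ≤ momentIndex μ (fun ω => ∑ k ∈ Finset.range (N ω), X k ω) := by
    apply le_of_forall_lt
    intro r hr
    have hrX := hr
    rw [mIdx_eq] at hrX
    obtain ⟨s, hsmem, hrs⟩ := lt_sSup_iff.mp hrX
    have hrN : r < momentIndex μ (fun ω => (N ω : ℝ)) := lt_of_lt_of_le hr hidx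
    rw [mIdx_eq] at hrN
    obtain ⟨u, humem, hru⟩ := lt_sSup_iff.mp hrN
    set v := min s u with hvdef
    have hrv : r < v := lt_min hrs hru
    have hvX := mem_anti (μ := μ) (min_le_left s u) hsmem
    have hvN := mem_anti (μ := μ) (min_le_right s u) humem
    set t := v.toReal with htdef
    have ht0 : (0:ℝ) ≤ t := ENNReal.toReal_nonneg
    have hA : ∫⁻ ω, g t (X 0 ω) ∂μ < ⊤ := hvX.2
    have hB : ∫⁻ ω, ENNReal.ofReal ((N ω : ℝ) ^ t) ∂μ < ⊤ := by
      have h2 := hvN.2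
      have heq : ∀ ω, g t ((N ω : ℝ)) = ENNReal.ofReal ((N ω : ℝ) ^ t) := by
        intro ω
        rw [g_def, max_eq_left (Nat.cast_nonneg _)]
      rwa [lintegral_congr heq] at h2
    have hE : ∫⁻ ω, ENNReal.ofReal (max (X 0 ω) 0) ∂μ < ⊤ := by
      calc ∫⁻ ω, ENNReal.ofReal (max (X 0 ω) 0) ∂μ
          ≤ ∫⁻ ω, (‖X 0 ω‖₊ : ℝ≥0∞) ∂μ := by
            refine lintegral_mono fun ω => ?_
            rw [← enorm_eq_nnnorm, Real.enorm_eq_ofReal_abs]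
            exact ENNReal.ofReal_le_ofReal (max_le (le_abs_self _) (abs_nonneg _))
        _ < ⊤ := hXint.2
    set K : ℝ≥0∞ := 1 + (∫⁻ ω, g t (X 0 ω) ∂μ)
        + (∫⁻ ω, ENNReal.ofReal (max (X 0 ω) 0) ∂μ) with hKdef
    have hK : K < ⊤ := by
      rw [hKdef]
      exact ENNReal.add_lt_top.mpr ⟨ENNReal.add_lt_top.mpr ⟨ENNReal.one_lt_top, hA⟩, hE⟩
    have hAK : (∫⁻ ω, g t (X 0 ω) ∂μ) ≤ K := by
      rw [hKdef]
      calc (∫⁻ ω, g t (X 0 ω) ∂μ) ≤ 1 + (∫⁻ ω, g t (X 0 ω) ∂μ) := le_add_self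
        _ ≤ _ := le_self_add
    have hEK : 1 + (∫⁻ ω, ENNReal.ofReal (max (X 0 ω) 0) ∂μ) ≤ K := by
      rw [hKdef, add_assoc]
      exact add_le_add le_rfl le_add_self
    have hgk : ∀ k, ∫⁻ ω, g t (X k ω) ∂μ = ∫⁻ ω, g t (X 0 ω) ∂μ :=
      fun k => lintegral_comp_identDistrib (hXident k) (g t) (g_meas t)
    have hmk : ∀ k, ∫⁻ ω, ENNReal.ofReal (max (X k ω) 0) ∂μ
        = ∫⁻ ω, ENNReal.ofReal (max (X 0 ω) 0) ∂μ :=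
      fun k => lintegral_comp_identDistrib (hXident k)
        (fun x => ENNReal.ofReal (max x 0)) (by measurability)
    have hFn : ∀ n : ℕ, 1 ≤ n →
        ∫⁻ ω, g t (∑ k ∈ Finset.range n, X k ω) ∂μ ≤ ENNReal.ofReal ((n:ℝ) ^ t) * K := by
      intro n hn
      have hn0 : (0:ℝ) < n := by exact_mod_cast hn
      have hn1 : (1:ℝ) ≤ n := by exact_mod_cast hn
      have hsum : ∀ ω, max (∑ k ∈ Finset.range n, X k ω) 0
          ≤ ∑ k ∈ Finset.range n, max (X k ω) 0 := by
        intro ω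
        exact max_le (Finset.sum_le_sum fun k _ => le_max_left _ _)
          (Finset.sum_nonneg fun k _ => le_max_right _ _)
      have hnt : (n:ℝ) ^ (t-1) * (n:ℝ) = (n:ℝ) ^ t := by
        rw [← Real.rpow_add_one hn0.ne' (t-1), sub_add_cancel]
      rcases le_total 1 t with ht1 | ht1
      · -- `t ≥ 1` : Jensen's inequality
        have hptw : ∀ ω, g t (∑ k ∈ Finset.range n, X k ω)
            ≤ ENNReal.ofReal ((n:ℝ) ^ (t-1)) * ∑ k ∈ Finset.range n, g t (X k ω) := by
          intro ω
          rw [g_def]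
          calc ENNReal.ofReal ((max (∑ k ∈ Finset.range n, X k ω) 0) ^ t)
              ≤ ENNReal.ofReal ((∑ k ∈ Finset.range n, max (X k ω) 0) ^ t) :=
                ENNReal.ofReal_le_ofReal
                  (Real.rpow_le_rpow (le_max_right _ _) (hsum ω) ht0)
            _ ≤ ENNReal.ofReal ((n:ℝ) ^ (t-1)
                  * ∑ k ∈ Finset.range n, (max (X k ω) 0) ^ t) :=
                ENNReal.ofReal_le_ofReal
                  (sum_rpow_le hn ht1 _ (fun k => le_max_right _ _))
            _ = ENNReal.ofReal ((n:ℝ) ^ (t-1))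
                  * ENNReal.ofReal (∑ k ∈ Finset.range n, (max (X k ω) 0) ^ t) :=
                ENNReal.ofReal_mul (by positivity)
            _ = ENNReal.ofReal ((n:ℝ) ^ (t-1)) * ∑ k ∈ Finset.range n, g t (X k ω) := by
                rw [ENNReal.ofReal_sum_of_nonneg (fun i _ => by positivity)]
                rfl
        calc ∫⁻ ω, g t (∑ k ∈ Finset.range n, X k ω) ∂μ
            ≤ ∫⁻ ω, ENNReal.ofReal ((n:ℝ) ^ (t-1))
                * ∑ k ∈ Finset.range n, g t (X k ω) ∂μ := lintegral_mono hptw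
          _ = ENNReal.ofReal ((n:ℝ) ^ (t-1))
                * ∑ k ∈ Finset.range n, ∫⁻ ω, g t (X k ω) ∂μ := by
              have hm : Measurable fun ω => ∑ k ∈ Finset.range n, g t (X k ω) :=
                Finset.measurable_sum _ fun k _ => (g_meas t).comp (hXmeas k)
              rw [lintegral_const_mul _ hm,
                lintegral_finset_sum (Finset.range n) (f := fun k ω => g t (X k ω))
                  (fun k _ => (g_meas t).comp (hXmeas k))]
          _ = ENNReal.ofReal ((n:ℝ) ^ (t-1)) * ((n : ℝ≥0∞) * ∫⁻ ω, g t (X 0 ω) ∂μ) := by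
              rw [Finset.sum_congr rfl (fun k _ => hgk k), Finset.sum_const,
                Finset.card_range, nsmul_eq_mul]
          _ = ENNReal.ofReal ((n:ℝ) ^ t) * ∫⁻ ω, g t (X 0 ω) ∂μ := by
              rw [← mul_assoc, ← ENNReal.ofReal_natCast n, ← ENNReal.ofReal_mul (by positivity),
                hnt]
          _ ≤ ENNReal.ofReal ((n:ℝ) ^ t) * K := mul_le_mul_right hAK _
      · -- `t ≤ 1` : tangent-line trick
        have hptw : ∀ ω, g t (∑ k ∈ Finset.range n, X k ω)
            ≤ ENNReal.ofReal ((n:ℝ) ^ t) + ENNReal.ofReal ((n:ℝ) ^ (t-1))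
                * ENNReal.ofReal (∑ k ∈ Finset.range n, max (X k ω) 0) := by
          intro ω
          rw [g_def]
          have htan := rpow_le_tangent
            (le_max_right (∑ k ∈ Finset.range n, X k ω) 0) hn1 ht0 ht1
          have h2 : (n:ℝ) ^ (t-1) * max (∑ k ∈ Finset.range n, X k ω) 0
              ≤ (n:ℝ) ^ (t-1) * ∑ k ∈ Finset.range n, max (X k ω) 0 :=
            mul_le_mul_of_nonneg_left (hsum ω) (by positivity)
          calc ENNReal.ofReal ((max (∑ k ∈ Finset.range n, X k ω) 0) ^ t)
              ≤ ENNReal.ofReal ((n:ℝ) ^ t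
                  + (n:ℝ) ^ (t-1) * ∑ k ∈ Finset.range n, max (X k ω) 0) :=
                ENNReal.ofReal_le_ofReal (htan.trans (by linarith))
            _ ≤ ENNReal.ofReal ((n:ℝ) ^ t)
                + ENNReal.ofReal ((n:ℝ) ^ (t-1) * ∑ k ∈ Finset.range n, max (X k ω) 0) :=
                ENNReal.ofReal_add_le
            _ = ENNReal.ofReal ((n:ℝ) ^ t) + ENNReal.ofReal ((n:ℝ) ^ (t-1))
                * ENNReal.ofReal (∑ k ∈ Finset.range n, max (X k ω) 0) := by
                rw [ENNReal.ofReal_mul (by positivity)]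
        calc ∫⁻ ω, g t (∑ k ∈ Finset.range n, X k ω) ∂μ
            ≤ ∫⁻ ω, (ENNReal.ofReal ((n:ℝ) ^ t) + ENNReal.ofReal ((n:ℝ) ^ (t-1))
                * ENNReal.ofReal (∑ k ∈ Finset.range n, max (X k ω) 0)) ∂μ :=
              lintegral_mono hptw
          _ = ENNReal.ofReal ((n:ℝ) ^ t) + ENNReal.ofReal ((n:ℝ) ^ (t-1))
                * ∑ k ∈ Finset.range n, ∫⁻ ω, ENNReal.ofReal (max (X k ω) 0) ∂μ := by
              have hm1 : Measurable fun ω =>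
                  ENNReal.ofReal (∑ k ∈ Finset.range n, max (X k ω) 0) := by
                apply ENNReal.measurable_ofReal.comp
                exact Finset.measurable_sum _ fun k _ => (hXmeas k).max measurable_const
              rw [lintegral_add_left measurable_const, lintegral_const, measure_univ, mul_one,
                lintegral_const_mul _ hm1]
              congr 1
              rw [lintegral_congr
                  (fun ω => ENNReal.ofReal_sum_of_nonneg (fun i _ => le_max_right _ _)),
                lintegral_finset_sum (Finset.range n)
                  (f := fun k ω => ENNReal.ofReal (max (X k ω) 0))
                  (fun k _ => ENNReal.measurable_ofReal.comp
                    ((hXmeas k).max measurable_const))]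
          _ = ENNReal.ofReal ((n:ℝ) ^ t) + ENNReal.ofReal ((n:ℝ) ^ (t-1))
                * ((n : ℝ≥0∞) * ∫⁻ ω, ENNReal.ofReal (max (X 0 ω) 0) ∂μ) := by
              rw [Finset.sum_congr rfl (fun k _ => hmk k), Finset.sum_const,
                Finset.card_range, nsmul_eq_mul]
          _ = ENNReal.ofReal ((n:ℝ) ^ t)
                * (1 + ∫⁻ ω, ENNReal.ofReal (max (X 0 ω) 0) ∂μ) := by
              rw [← mul_assoc, ← ENNReal.ofReal_natCast n, ← ENNReal.ofReal_mul (by positivity),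
                hnt, mul_add, mul_one]
          _ ≤ ENNReal.ofReal ((n:ℝ) ^ t) * K := mul_le_mul_right hEK _
    -- assemble via the joint law
    have hvmem : v ∈ {s : ℝ≥0∞ | s ≠ ⊤ ∧
        ∫⁻ ω, g s.toReal ((fun ω => ∑ k ∈ Finset.range (N ω), X k ω) ω) ∂μ < ⊤} := by
      refine ⟨hvX.1, ?_⟩
      set Φ : ℕ → (ℕ → ℝ) → ℝ≥0∞ := fun n x => g t (∑ k ∈ Finset.range n, x k) with hΦdef
      have hcn : ∀ n : ℕ, Measurable fun x : ℕ → ℝ => g t (∑ k ∈ Finset.range n, x k) :=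
        fun n => (g_meas t).comp (Finset.measurable_sum _ fun k _ => measurable_pi_apply k)
      have hΦmeas : Measurable fun p : (ℕ → ℝ) × ℕ => Φ p.2 p.1 :=
        measurable_from_prod_countable_left fun n => hcn n
      have htrans := lintegral_comp_indep hXmeas hNmeas hNindep Φ hΦmeas
      have hνmap : ∀ n : ℕ, (∫⁻ x, Φ n x ∂(μ.map (fun ω (i : ℕ) => X i ω)))
          = ∫⁻ ω, g t (∑ k ∈ Finset.range n, X k ω) ∂μ :=
        fun n => lintegral_map (hcn n) hXV
      have hnull : (μ.map N) {0} = 0 := by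
        rw [Measure.map_apply hNmeas (measurableSet_singleton 0)]
        have hempty : N ⁻¹' {0} = (∅ : Set Ω) := by
          ext ω
          simp only [Set.mem_preimage, Set.mem_singleton_iff, Set.mem_empty_iff_false,
            iff_false]
          exact fun hc => by have := hNpos ω; omega
        rw [hempty, measure_empty]
      have hae : ∀ᵐ n ∂(μ.map N),
          (∫⁻ x, Φ n x ∂(μ.map (fun ω (i : ℕ) => X i ω)))
            ≤ ENNReal.ofReal ((n:ℝ) ^ t) * K := by
        rw [ae_iff]
        refine measure_mono_null ?_ hnull
        intro n hn
        simp only [Set.mem_setOf_eq] at hn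
        simp only [Set.mem_singleton_iff]
        by_contra h0
        apply hn
        rw [hνmap n]
        exact hFn n (Nat.one_le_iff_ne_zero.mpr h0)
      have hmeasnt : Measurable fun n : ℕ => ENNReal.ofReal ((n:ℝ) ^ t) :=
        measurable_from_top
      have hmain : ∫⁻ ω, g t (∑ k ∈ Finset.range (N ω), X k ω) ∂μ < ⊤ := by
        calc ∫⁻ ω, g t (∑ k ∈ Finset.range (N ω), X k ω) ∂μ
            = ∫⁻ n, ∫⁻ x, Φ n x ∂(μ.map (fun ω (i : ℕ) => X i ω)) ∂(μ.map N) := htrans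
          _ ≤ ∫⁻ n, ENNReal.ofReal ((n:ℝ) ^ t) * K ∂(μ.map N) := lintegral_mono_ae hae
          _ = (∫⁻ n, ENNReal.ofReal ((n:ℝ) ^ t) ∂(μ.map N)) * K :=
              lintegral_mul_const _ hmeasnt
          _ = (∫⁻ ω, ENNReal.ofReal ((N ω : ℝ) ^ t) ∂μ) * K := by
              congr 1
              exact lintegral_map hmeasnt hNmeas
          _ < ⊤ := ENNReal.mul_lt_top hB hK
      exact hmain
    calc r < v := hrv
      _ ≤ momentIndex μ (fun ω => ∑ k ∈ Finset.range (N ω), X k ω) := by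
          rw [mIdx_eq]
          exact le_sSup hvmem
  exact le_antisymm part1 part2
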